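/- Let 0 < α ≤ 1 and A_k^{α-1} = binom(k+α-1, k). For all n ≥ 1 and u ∈ ℝ with sin(u/2) ≠ 0, |∑_{k=0}^{n-1} A_{n-1-k}^{α-1} e^{i(k+1/2)u}| ≤ C/|sin(u/2)|^α + C·n^{α-1}/|sin(u/2)| for a constant C depending only on α. -/

import Mathlib

open Real Finset

/-- The Cesàro numbers `A_k^α = (α+1)(α+2)⋯(α+k)/k!`. -/
noncomputable def cesaroA (α : ℝ) (k : ℕ) : ℝ :=
  (∏ i ∈ Finset.range k, (α + 1 + i)) / (Nat.factorial k)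

lemma cesaroA_zero (β : ℝ) : cesaroA β 0 = 1 := by simp [cesaroA]

lemma cesaroA_succ (β : ℝ) (k : ℕ) :
    cesaroA β (k + 1) = cesaroA β k * ((β + 1 + k) / (k + 1)) := by
  have hk : (Nat.factorial k : ℝ) ≠ 0 := Nat.cast_ne_zero.mpr (Nat.factorial_ne_zero k)
  have hk1 : ((k : ℝ) + 1) ≠ 0 := by positivity
  rw [cesaroA, cesaroA, prod_range_succ, Nat.factorial_succ]
  push_cast
  rw [div_mul_div_comm]
  ring

lemma cesaroA_pred (α : ℝ) (m : ℕ) :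
    cesaroA (α - 1) (m + 1) = cesaroA α m * (α / (m + 1)) := by
  have hk : (Nat.factorial m : ℝ) ≠ 0 := Nat.cast_ne_zero.mpr (Nat.factorial_ne_zero m)
  have hk1 : ((m : ℝ) + 1) ≠ 0 := by positivity
  have hp : ∏ i ∈ range (m + 1), (α - 1 + 1 + (i : ℝ)) = α * ∏ i ∈ range m, (α + 1 + i) := by
    rw [prod_range_succ']
    push_cast
    rw [mul_comm]
    congr 1
    · ring
    · exact Finset.prod_congr rfl fun i _ => by ring
  rw [cesaroA, cesaroA, hp, Nat.factorial_succ]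
  push_cast
  field_simp

lemma cesaroA_sum (α : ℝ) (m : ℕ) :
    ∑ j ∈ range (m + 1), cesaroA (α - 1) j = cesaroA α m := by
  induction m with
  | zero => simp [cesaroA]
  | succ m ih =>
      have hk1 : ((m : ℝ) + 1) ≠ 0 := by positivity
      rw [sum_range_succ, ih, cesaroA_pred, cesaroA_succ]
      field_simp
      ring

lemma cesaroA_pos {β : ℝ} (hβ : 0 < β + 1) (k : ℕ) : 0 < cesaroA β k := by
  apply div_pos
  · exact Finset.prod_pos fun i _ => by positivity
  · exact_mod_cast Nat.factorial_pos k

lemma cesaroA_antitone {α : ℝ} (hα0 : 0 < α) (hα1 : α ≤ 1) :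
    Antitone (cesaroA (α - 1)) := by
  apply antitone_nat_of_succ_le
  intro k
  have h := cesaroA_pos (β := α - 1) (by linarith) k
  have : cesaroA (α - 1) (k + 1) = cesaroA (α - 1) k * ((α - 1 + 1 + k) / (k + 1)) :=
    cesaroA_succ _ k
  rw [this]
  have hfrac : (α - 1 + 1 + (k : ℝ)) / (k + 1) ≤ 1 := by
    rw [div_le_one (by positivity)]; linarith
  nlinarith

lemma cesaroA_upper {α : ℝ} (hα0 : 0 < α) (hα1 : α ≤ 1) (k : ℕ) :
    cesaroA α k ≤ Real.exp 1 * ((k : ℝ) + 1) ^ α := by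
  have h1 : cesaroA α k = ∏ i ∈ range k, ((α + 1 + i) / ((i : ℝ) + 1)) := by
    rw [cesaroA, Finset.prod_div_distrib, ← Finset.prod_range_add_one_eq_factorial]
    push_cast
    rfl
  have h2 : ∀ i ∈ range k, (α + 1 + (i : ℝ)) / ((i : ℝ) + 1) ≤ Real.exp (α / ((i : ℝ) + 1)) := by
    intro i _
    have hi : (0 : ℝ) < (i : ℝ) + 1 := by positivity
    have : (α + 1 + (i : ℝ)) / ((i : ℝ) + 1) = α / ((i : ℝ) + 1) + 1 := by field_simp; ring
    rw [this]
    exact Real.add_one_le_exp _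
  have h3 : cesaroA α k ≤ Real.exp (∑ i ∈ range k, α / ((i : ℝ) + 1)) := by
    rw [h1, Real.exp_sum]
    exact Finset.prod_le_prod (fun i _ => by positivity) h2
  have h4 : ∑ i ∈ range k, α / ((i : ℝ) + 1) = α * (harmonic k : ℝ) := by
    rw [harmonic]
    push_cast
    rw [Finset.mul_sum]
    exact Finset.sum_congr rfl fun i _ => by rw [div_eq_mul_inv]
  have h5 : (harmonic k : ℝ) ≤ 1 + Real.log ((k : ℝ) + 1) := by
    refine (harmonic_le_one_add_log k).trans ?_
    have : Real.log (k : ℝ) ≤ Real.log ((k : ℝ) + 1) := by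
      rcases Nat.eq_zero_or_pos k with h | h
      · simp [h]
      · exact Real.log_le_log (by exact_mod_cast h) (by linarith)
    linarith
  have h6 : α * (harmonic k : ℝ) ≤ 1 + α * Real.log ((k : ℝ) + 1) := by
    have hl : 0 ≤ Real.log ((k : ℝ) + 1) := Real.log_nonneg (by push_cast; linarith [Nat.cast_nonneg (α := ℝ) k])
    nlinarith
  calc cesaroA α k ≤ Real.exp (∑ i ∈ range k, α / ((i : ℝ) + 1)) := h3
    _ ≤ Real.exp (1 + α * Real.log ((k : ℝ) + 1)) := by
        apply Real.exp_le_exp.mpr; rw [h4]; exact h6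
    _ = Real.exp 1 * ((k : ℝ) + 1) ^ α := by
        rw [Real.exp_add]
        congr 1
        rw [Real.rpow_def_of_pos (by positivity), mul_comm]

lemma geom_bound (z : ℂ) (hz : ‖z‖ ≤ 1) (hz1 : z ≠ 1) (j : ℕ) :
    ‖∑ i ∈ range j, z ^ i‖ ≤ 2 / ‖1 - z‖ := by
  have ht : 0 < ‖(1 : ℂ) - z‖ := by
    rw [norm_pos_iff]
    intro h
    apply hz1
    linear_combination -h
  rw [geom_sum_eq hz1, norm_div, norm_sub_rev z 1]
  gcongr
  refine (norm_sub_le _ _).trans ?_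
  rw [norm_pow, norm_one]
  have : ‖z‖ ^ j ≤ 1 := pow_le_one₀ (norm_nonneg z) hz
  linarith

lemma abel_bound (a : ℕ → ℝ) (ha : Antitone a) (ha0 : ∀ k, 0 ≤ a k) (z : ℂ)
    (hz : ‖z‖ ≤ 1) (hz1 : z ≠ 1) (n : ℕ) :
    ‖∑ k ∈ range n, (a k : ℂ) * z ^ k‖ ≤ 2 * a 0 / ‖1 - z‖ := by
  have ht : 0 < ‖(1 : ℂ) - z‖ := by
    rw [norm_pos_iff]; intro h; apply hz1; linear_combination -h
  rcases Nat.eq_zero_or_pos n with hn | hn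
  · have := ha0 0
    simp [hn]
    positivity
  have hby := Finset.sum_range_by_parts (fun k => (a k : ℂ)) (fun k => z ^ k) n
  simp only [smul_eq_mul] at hby
  rw [hby]
  have hG : ∀ j : ℕ, ‖∑ i ∈ range j, z ^ i‖ ≤ 2 / ‖1 - z‖ := geom_bound z hz hz1
  calc ‖(a (n-1) : ℂ) * ∑ i ∈ range n, z ^ i -
          ∑ i ∈ range (n-1), ((a (i+1) : ℂ) - a i) * ∑ j ∈ range (i+1), z ^ j‖
      ≤ ‖(a (n-1) : ℂ) * ∑ i ∈ range n, z ^ i‖ +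
          ‖∑ i ∈ range (n-1), ((a (i+1) : ℂ) - a i) * ∑ j ∈ range (i+1), z ^ j‖ :=
        norm_sub_le _ _
    _ ≤ a (n-1) * (2 / ‖1 - z‖) +
          ∑ i ∈ range (n-1), (a i - a (i+1)) * (2 / ‖1 - z‖) := by
        gcongr ?_ + ?_
        · rw [norm_mul, Complex.norm_real, Real.norm_eq_abs, abs_of_nonneg (ha0 _)]
          exact mul_le_mul_of_nonneg_left (hG n) (ha0 _)
        · refine (norm_sum_le _ _).trans ?_
          apply Finset.sum_le_sum
          intro i _
          rw [norm_mul]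
          have h1 : ‖(a (i+1) : ℂ) - (a i : ℂ)‖ = a i - a (i+1) := by
            rw [← Complex.ofReal_sub, Complex.norm_real, Real.norm_eq_abs, abs_of_nonpos (by
              have := ha (Nat.le_succ i); linarith)]
            ring
          rw [h1]
          exact mul_le_mul_of_nonneg_left (hG _) (by have := ha (Nat.le_succ i); linarith)
    _ = (a (n-1) + ∑ i ∈ range (n-1), (a i - a (i+1))) * (2 / ‖1 - z‖) := by
        rw [add_mul, Finset.sum_mul]
    _ = (a (n-1) + (a 0 - a (n-1))) * (2 / ‖1 - z‖) := by
        rw [Finset.sum_range_sub' a (n-1)]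
    _ = 2 * a 0 / ‖1 - z‖ := by ring

lemma abel_bound_Ico (a : ℕ → ℝ) (ha : Antitone a) (ha0 : ∀ k, 0 ≤ a k) (z : ℂ)
    (hz : ‖z‖ ≤ 1) (hz1 : z ≠ 1) (m n : ℕ) :
    ‖∑ k ∈ Ico m n, (a k : ℂ) * z ^ k‖ ≤ 2 * a m / ‖1 - z‖ := by
  rw [Finset.sum_Ico_eq_sum_range]
  have hterm : ∀ i, (a (m + i) : ℂ) * z ^ (m + i) = z ^ m * ((a (m + i) : ℂ) * z ^ i) := by
    intro i; rw [pow_add]; ring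
  simp only [hterm]
  rw [← Finset.mul_sum, norm_mul, norm_pow]
  have h := abel_bound (fun i => a (m + i)) (fun i j hij => ha (by omega))
    (fun i => ha0 _) z hz hz1 (n - m)
  simp only [Nat.add_zero] at h
  calc ‖z‖ ^ m * ‖∑ i ∈ range (n - m), (a (m + i) : ℂ) * z ^ i‖
      ≤ 1 * (2 * a m / ‖1 - z‖) := by
        apply mul_le_mul (pow_le_one₀ (norm_nonneg z) hz) h (norm_nonneg _) zero_le_one
    _ = 2 * a m / ‖1 - z‖ := one_mul _

/-- For `0 < α ≤ 1`: there is a constant `C` (depending only on `α`) such that for all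
`n ≥ 1` and real `u` with `sin (u/2) ≠ 0`,
`|∑_{k=0}^{n-1} A_{n-1-k}^{α-1} e^{i(k+1/2)u}| ≤ C / |sin(u/2)|^α + C n^{α-1} / |sin(u/2)|`. -/
theorem cesaro_kernel_bound (α : ℝ) (hα0 : 0 < α) (hα1 : α ≤ 1) :
    ∃ C > (0 : ℝ), ∀ n : ℕ, 1 ≤ n → ∀ u : ℝ, Real.sin (u / 2) ≠ 0 →
      ‖∑ k ∈ Finset.range n, (cesaroA (α - 1) (n - 1 - k) : ℂ) *
          Complex.exp (Complex.I * ((k : ℂ) + 1 / 2) * (u : ℂ))‖ ≤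
        C / |Real.sin (u / 2)| ^ α + C * (n : ℝ) ^ (α - 1) / |Real.sin (u / 2)| := by
  refine ⟨4 * Real.exp 1, by positivity, ?_⟩
  intro n hn u hu
  set s : ℝ := |Real.sin (u / 2)| with hsdef
  have hs0 : 0 < s := abs_pos.mpr hu
  have hs1 : s ≤ 1 := Real.abs_sin_le_one _
  set z : ℂ := Complex.exp (-(Complex.I * (u : ℂ))) with hzdef
  have hznorm : ‖z‖ = 1 := by
    rw [hzdef, Complex.norm_exp]
    simp
  -- `‖1 - z‖ = 2 s`
  have hzz : z = Complex.cos (u : ℂ) - Complex.sin (u : ℂ) * Complex.I := by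
    rw [hzdef, show -(Complex.I * (u : ℂ)) = (-(u : ℂ)) * Complex.I by ring,
      Complex.exp_mul_I, Complex.cos_neg, Complex.sin_neg]
    ring
  have h1z : (1 : ℂ) - z = ((1 - Real.cos u : ℝ) : ℂ) + ((Real.sin u : ℝ) : ℂ) * Complex.I := by
    rw [hzz]
    push_cast [Complex.ofReal_cos, Complex.ofReal_sin]
    ring
  have htz : ‖(1 : ℂ) - z‖ = 2 * s := by
    rw [h1z, Complex.norm_add_mul_I, hsdef, Real.abs_sin_half]
    rw [show (1 - Real.cos u) ^ 2 + Real.sin u ^ 2 = 4 * ((1 - Real.cos u) / 2) by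
      nlinarith [Real.sin_sq_add_cos_sq u]]
    rw [show (4 : ℝ) * ((1 - Real.cos u) / 2) = 2 ^ 2 * ((1 - Real.cos u) / 2) by norm_num]
    rw [Real.sqrt_mul (by positivity), Real.sqrt_sq (by norm_num)]
  have hz1 : z ≠ 1 := by
    intro h
    rw [h] at htz
    simp at htz
    linarith
  -- rewrite the sum
  have hsum : ‖∑ k ∈ Finset.range n, (cesaroA (α - 1) (n - 1 - k) : ℂ) *
        Complex.exp (Complex.I * ((k : ℂ) + 1 / 2) * (u : ℂ))‖
      = ‖∑ j ∈ range n, (cesaroA (α - 1) j : ℂ) * z ^ j‖ := by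
    have e1 : ∀ k ∈ range n, (cesaroA (α - 1) (n - 1 - k) : ℂ) *
          Complex.exp (Complex.I * ((k : ℂ) + 1 / 2) * (u : ℂ))
        = (fun j => (cesaroA (α - 1) j : ℂ) *
            Complex.exp (Complex.I * (((n - 1 - j : ℕ) : ℂ) + 1 / 2) * (u : ℂ))) (n - 1 - k) := by
      intro k hk
      have hk' : k < n := mem_range.mp hk
      simp only
      rw [show n - 1 - (n - 1 - k) = k by omega]
    rw [show (∑ k ∈ Finset.range n, (cesaroA (α - 1) (n - 1 - k) : ℂ) *
          Complex.exp (Complex.I * ((k : ℂ) + 1 / 2) * (u : ℂ)))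
        = ∑ j ∈ range n, (cesaroA (α - 1) j : ℂ) *
            Complex.exp (Complex.I * (((n - 1 - j : ℕ) : ℂ) + 1 / 2) * (u : ℂ)) from
      (Finset.sum_congr rfl e1).trans (Finset.sum_range_reflect (fun j => (cesaroA (α - 1) j : ℂ) *
            Complex.exp (Complex.I * (((n - 1 - j : ℕ) : ℂ) + 1 / 2) * (u : ℂ))) n)]
    have e2 : ∀ j ∈ range n, (cesaroA (α - 1) j : ℂ) *
          Complex.exp (Complex.I * (((n - 1 - j : ℕ) : ℂ) + 1 / 2) * (u : ℂ))
        = Complex.exp (Complex.I * ((n : ℂ) - 1 / 2) * (u : ℂ)) *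
            ((cesaroA (α - 1) j : ℂ) * z ^ j) := by
      intro j hj
      have hj' : j < n := mem_range.mp hj
      have hcast : ((n - 1 - j : ℕ) : ℂ) = (n : ℂ) - 1 - j := by
        have h1 : ((n - 1 - j : ℕ) : ℂ) = ((n - (1 + j) : ℕ) : ℂ) := by rw [Nat.sub_sub]
        rw [h1, Nat.cast_sub (by omega)]
        push_cast
        ring
      have harg : Complex.I * (((n : ℂ) - 1 - j) + 1 / 2) * (u : ℂ)
          = Complex.I * ((n : ℂ) - 1 / 2) * (u : ℂ) + (j : ℂ) * (-(Complex.I * (u : ℂ))) := by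
        ring
      rw [hcast, harg, Complex.exp_add, Complex.exp_nat_mul, ← hzdef]
      ring
    rw [Finset.sum_congr rfl e2, ← Finset.mul_sum, norm_mul]
    have hph : ‖Complex.exp (Complex.I * ((n : ℂ) - 1 / 2) * (u : ℂ))‖ = 1 := by
      rw [Complex.norm_exp]
      norm_num [Complex.mul_re, Complex.mul_im]
    rw [hph, one_mul]
  rw [hsum]
  -- the coefficients
  set a : ℕ → ℝ := cesaroA (α - 1) with hadef
  have ha_anti : Antitone a := cesaroA_antitone hα0 hα1
  have ha_pos : ∀ k, 0 < a k := cesaroA_pos (by linarith)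
  -- the cut point
  set N : ℕ := ⌈1 / (2 * s)⌉₊ with hNdef
  have hN1 : 1 ≤ N := Nat.one_le_ceil_iff.mpr (by positivity)
  have hNge : 1 / (2 * s) ≤ (N : ℝ) := Nat.le_ceil _
  have hNle : (N : ℝ) ≤ 3 / (2 * s) := by
    have h1 : (N : ℝ) < 1 / (2 * s) + 1 := Nat.ceil_lt_add_one (by positivity)
    have h2 : 1 / (2 * s) + 1 ≤ 3 / (2 * s) := by
      rw [div_add' _ _ _ (by positivity : (2 : ℝ) * s ≠ 0), div_le_div_iff₀ (by positivity) (by positivity)]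
      nlinarith
    linarith
  -- trivial bound for initial segments
  have trivialBound : ∀ m : ℕ, 1 ≤ m →
      ‖∑ j ∈ range m, (a j : ℂ) * z ^ j‖ ≤ Real.exp 1 * (m : ℝ) ^ α := by
    intro m hm
    calc ‖∑ j ∈ range m, (a j : ℂ) * z ^ j‖ ≤ ∑ j ∈ range m, ‖(a j : ℂ) * z ^ j‖ :=
          norm_sum_le _ _
      _ = ∑ j ∈ range m, a j := by
          refine Finset.sum_congr rfl fun j _ => ?_
          rw [norm_mul, norm_pow, hznorm, one_pow, mul_one, Complex.norm_real,
            Real.norm_eq_abs, abs_of_nonneg (ha_pos j).le]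
      _ = cesaroA α (m - 1) := by
          rw [← cesaroA_sum α (m - 1), show m - 1 + 1 = m by omega]
      _ ≤ Real.exp 1 * (((m - 1 : ℕ) : ℝ) + 1) ^ α := cesaroA_upper hα0 hα1 _
      _ = Real.exp 1 * (m : ℝ) ^ α := by
          rw [Nat.cast_sub hm]
          norm_num
  -- `N ^ α ≤ 2 / s ^ α`
  have hNpow : ((N : ℝ)) ^ α ≤ 2 / s ^ α := by
    calc ((N : ℝ)) ^ α ≤ (2 / s) ^ α := by
          apply Real.rpow_le_rpow (Nat.cast_nonneg N) _ hα0.le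
          calc (N : ℝ) ≤ 3 / (2 * s) := hNle
            _ ≤ 2 / s := by
                rw [div_le_div_iff₀ (by positivity) (by positivity)]
                nlinarith
      _ = 2 ^ α / s ^ α := Real.div_rpow (by norm_num) hs0.le α
      _ ≤ 2 / s ^ α := by
          have h2 : (2 : ℝ) ^ α ≤ 2 := by
            calc (2 : ℝ) ^ α ≤ 2 ^ (1 : ℝ) :=
                  Real.rpow_le_rpow_of_exponent_le (by norm_num) hα1
              _ = 2 := Real.rpow_one 2
          gcongr
  have key : ‖∑ j ∈ range n, (a j : ℂ) * z ^ j‖ ≤ 4 * Real.exp 1 / s ^ α := by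
    rcases le_or_gt n N with hcase | hcase
    · calc ‖∑ j ∈ range n, (a j : ℂ) * z ^ j‖ ≤ Real.exp 1 * (n : ℝ) ^ α :=
            trivialBound n hn
        _ ≤ Real.exp 1 * ((N : ℝ)) ^ α := by
            gcongr <;> exact_mod_cast hcase
        _ ≤ Real.exp 1 * (2 / s ^ α) := by gcongr
        _ = 2 * Real.exp 1 / s ^ α := by ring
        _ ≤ 4 * Real.exp 1 / s ^ α := by gcongr <;> linarith [Real.exp_pos 1]
    · -- split the sum
      have hNn : N ≤ n := hcase.le
      have hsplit : ∑ j ∈ range n, (a j : ℂ) * z ^ j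
          = (∑ j ∈ range N, (a j : ℂ) * z ^ j) + ∑ j ∈ Ico N n, (a j : ℂ) * z ^ j := by
        rw [range_eq_Ico, range_eq_Ico, Finset.sum_Ico_consecutive _ (Nat.zero_le N) hNn]
      -- bound `a N`
      have haN : a N ≤ 2 * Real.exp 1 * s ^ (1 - α) := by
        have h1 : a N = cesaroA α (N - 1) * (α / N) := by
          rw [hadef, show N = (N - 1) + 1 by omega, cesaroA_pred]
          rw [show (N - 1) + 1 = N by omega]
          push_cast [Nat.cast_sub hN1]
          ring_nf
        have h2 : cesaroA α (N - 1) ≤ Real.exp 1 * (N : ℝ) ^ α := by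
          refine (cesaroA_upper hα0 hα1 _).trans_eq ?_
          rw [Nat.cast_sub hN1]
          norm_num
        have hNr : (0 : ℝ) < (N : ℝ) := by exact_mod_cast hN1
        have h3 : a N ≤ Real.exp 1 * (N : ℝ) ^ (α - 1) := by
          rw [h1]
          have hfrac : α / (N : ℝ) ≤ 1 / N := by gcongr
          calc cesaroA α (N - 1) * (α / N) ≤ (Real.exp 1 * (N : ℝ) ^ α) * (1 / N) := by
                apply mul_le_mul h2 hfrac (by positivity) (by positivity)
            _ = Real.exp 1 * (N : ℝ) ^ (α - 1) := by
                rw [Real.rpow_sub hNr, Real.rpow_one]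
                ring
        have h4 : ((N : ℝ)) ^ (α - 1) ≤ (1 / (2 * s)) ^ (α - 1) :=
          Real.rpow_le_rpow_of_nonpos (by positivity) hNge (by linarith)
        have h5 : ((1 : ℝ) / (2 * s)) ^ (α - 1) = (2 * s) ^ (1 - α) := by
          rw [one_div, Real.inv_rpow (by positivity), ← Real.rpow_neg (by positivity),
            show -(α - 1) = 1 - α by ring]
        have h6 : ((2 : ℝ) * s) ^ (1 - α) ≤ 2 * s ^ (1 - α) := by
          rw [Real.mul_rpow (by norm_num) hs0.le]
          have h2a : (2 : ℝ) ^ (1 - α) ≤ 2 := by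
            calc (2 : ℝ) ^ (1 - α) ≤ 2 ^ (1 : ℝ) :=
                  Real.rpow_le_rpow_of_exponent_le (by norm_num) (by linarith)
              _ = 2 := Real.rpow_one 2
          have hsp : 0 ≤ s ^ (1 - α) := Real.rpow_nonneg hs0.le _
          nlinarith
        calc a N ≤ Real.exp 1 * (N : ℝ) ^ (α - 1) := h3
          _ ≤ Real.exp 1 * (2 * s ^ (1 - α)) :=
              mul_le_mul_of_nonneg_left (h4.trans (h5.le.trans h6)) (Real.exp_pos 1).le
          _ = 2 * Real.exp 1 * s ^ (1 - α) := by ring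
      have habel : ‖∑ j ∈ Ico N n, (a j : ℂ) * z ^ j‖ ≤ 2 * Real.exp 1 / s ^ α := by
        calc ‖∑ j ∈ Ico N n, (a j : ℂ) * z ^ j‖ ≤ 2 * a N / ‖1 - z‖ :=
              abel_bound_Ico a ha_anti (fun k => (ha_pos k).le) z hznorm.le hz1 N n
          _ = a N / s := by rw [htz]; field_simp
          _ ≤ (2 * Real.exp 1 * s ^ (1 - α)) / s := by gcongr
          _ = 2 * Real.exp 1 / s ^ α := by
              rw [show (1 : ℝ) - α = 1 + (-α) by ring, Real.rpow_add hs0, Real.rpow_one,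
                Real.rpow_neg hs0.le]
              field_simp
      calc ‖∑ j ∈ range n, (a j : ℂ) * z ^ j‖
          ≤ ‖∑ j ∈ range N, (a j : ℂ) * z ^ j‖ + ‖∑ j ∈ Ico N n, (a j : ℂ) * z ^ j‖ := by
            rw [hsplit]; exact norm_add_le _ _
        _ ≤ Real.exp 1 * (2 / s ^ α) + 2 * Real.exp 1 / s ^ α := by
            gcongr
            exact (trivialBound N hN1).trans (by gcongr)
        _ = 4 * Real.exp 1 / s ^ α := by ring
  -- conclude
  have hsecond : 0 ≤ 4 * Real.exp 1 * (n : ℝ) ^ (α - 1) / s := by positivity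
  linarith [key]
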